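/- (Dyadic John–Nirenberg lemma.) Let a : Δ → [0,∞) be a function on dyadic cubes of R^d and suppose there exist N, δ > 0 such that for every dyadic cube R, |{x ∈ R : Σ_{Q ∋ x, Q ⊆ R} a(Q) ≤ N}| ≥ δ |R|. Then Σ_{Q ⊆ R} a(Q)|Q| ≤ C(d,N,δ) |R| for every dyadic cube R. -/

import Mathlib

open MeasureTheory Metric Set ENNReal

/-- The axis-parallel cube with corner `a` and side length `l`. -/
def cube {d : ℕ} (a : Fin d → ℝ) (l : ℝ) : Set (Fin d → ℝ) :=
  Set.Icc a (fun i => a i + l)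

/-- The dyadic cube with index `p = (n, j)`. -/
def dc {d : ℕ} (p : ℤ × (Fin d → ℤ)) : Set (Fin d → ℝ) :=
  cube (fun i => (2 : ℝ) ^ p.1 * (p.2 i : ℝ)) ((2 : ℝ) ^ p.1)

namespace JN

open scoped Classical

variable {d : ℕ}

lemma mem_dc {p : ℤ × (Fin d → ℤ)} {x : Fin d → ℝ} :
    x ∈ dc p ↔ ∀ i, (2:ℝ)^p.1 * p.2 i ≤ x i ∧ x i ≤ (2:ℝ)^p.1 * p.2 i + 2^p.1 := by
  simp [dc, cube, Set.mem_Icc, Pi.le_def, forall_and]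

lemma dc_nonempty (p : ℤ × (Fin d → ℤ)) : (dc p).Nonempty :=
  Set.nonempty_Icc.mpr (fun i => le_add_of_nonneg_right (by positivity))

lemma measurableSet_dc (p : ℤ × (Fin d → ℤ)) : MeasurableSet (dc p) :=
  measurableSet_Icc

lemma scale_le (hd : 0 < d) {p q : ℤ × (Fin d → ℤ)} (h : dc p ⊆ dc q) : p.1 ≤ q.1 := by
  have hne : (fun i => (2:ℝ)^p.1 * (p.2 i : ℝ)) ≤ fun i => (2:ℝ)^p.1 * (p.2 i : ℝ) + 2^p.1 :=
    fun i => le_add_of_nonneg_right (by positivity)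
  rw [dc, cube, dc, cube, Set.Icc_subset_Icc_iff hne] at h
  obtain ⟨h1, h2⟩ := h
  set i0 : Fin d := ⟨0, hd⟩
  have := h1 i0
  have := h2 i0
  have h2p : (2:ℝ)^p.1 ≤ 2^q.1 := by simp only at *; linarith
  exact (zpow_le_zpow_iff_right₀ (by norm_num : (1:ℝ) < 2)).mp h2p

/-- key arithmetic fact -/
lemma key {n m j k : ℤ} {y : ℝ} (hnm : n ≤ m)
    (h1 : 2^n * j < y) (h2 : y < 2^n * j + 2^n) (h3 : 2^m * k < y) (h4 : y < 2^m * k + 2^m) :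
    (2:ℝ)^m * k ≤ 2^n * j ∧ (2:ℝ)^n * j + 2^n ≤ 2^m * k + 2^m := by
  set t : ℤ := 2 ^ (m - n).toNat with ht
  have htr : (2:ℝ)^m = 2^n * (t : ℝ) := by
    have : ((t : ℤ) : ℝ) = (2:ℝ) ^ ((m - n) : ℤ) := by
      rw [ht]; push_cast
      rw [← zpow_natCast, Int.toNat_of_nonneg (by omega)]
    rw [this, ← zpow_add₀ (by norm_num : (2:ℝ) ≠ 0)]
    ring_nf
  have h2n : (0:ℝ) < 2^n := by positivity
  have hint1 : t * k ≤ j := by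
    have hr : (2:ℝ)^n * (t * k : ℤ) < 2^n * ((j : ℝ) + 1) := by
      push_cast
      calc (2:ℝ)^n * ((t:ℝ) * k) = 2^m * k := by rw [htr]; ring
        _ < y := h3
        _ < 2^n * ((j:ℝ) + 1) := by linarith
    have : ((t * k : ℤ) : ℝ) < ((j : ℤ) : ℝ) + 1 := by
      have := (mul_lt_mul_iff_right₀ h2n).mp hr; push_cast at this ⊢; linarith
    have : t * k < j + 1 := by exact_mod_cast this
    omega
  have hint2 : j + 1 ≤ t * (k + 1) := by
    have hr : (2:ℝ)^n * (j : ℝ) < 2^n * ((t * (k+1) : ℤ) : ℝ) := by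
      push_cast
      calc (2:ℝ)^n * (j:ℝ) < y := h1
        _ < 2^m * k + 2^m := h4
        _ = 2^n * ((t:ℝ) * (k + 1)) := by rw [htr]; ring
    have : ((j:ℤ) : ℝ) < ((t * (k+1) : ℤ) : ℝ) := by
      have := (mul_lt_mul_iff_right₀ h2n).mp hr; push_cast at this ⊢; linarith
    have : j < t * (k + 1) := by exact_mod_cast this
    omega
  constructor
  · calc (2:ℝ)^m * k = 2^n * ((t * k : ℤ) : ℝ) := by push_cast; rw [htr]; ring
      _ ≤ 2^n * (j : ℝ) := by
        apply mul_le_mul_of_nonneg_left _ h2n.le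
        exact_mod_cast hint1
  · calc (2:ℝ)^n * j + 2^n = 2^n * ((j + 1 : ℤ) : ℝ) := by push_cast; ring
      _ ≤ 2^n * ((t * (k+1) : ℤ) : ℝ) := by
        apply mul_le_mul_of_nonneg_left _ h2n.le
        exact_mod_cast hint2
      _ = 2^m * k + 2^m := by push_cast; rw [htr]; ring

def Bad (d : ℕ) : Set (Fin d → ℝ) := {x | ∃ i : Fin d, ∃ n k : ℤ, x i = 2^n * k}

lemma volume_Bad : volume (Bad d) = 0 := by
  have : Bad d = ⋃ (i : Fin d), ⋃ (n : ℤ), ⋃ (k : ℤ), {x : Fin d → ℝ | x i = 2^n * k} := by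
    ext x; simp [Bad]
  rw [this]
  refine measure_iUnion_null fun i => measure_iUnion_null fun n => measure_iUnion_null fun k => ?_
  rw [volume_pi]
  exact Measure.pi_hyperplane (fun _ => (volume : Measure ℝ)) i _

lemma dc_subset_dc {p q : ℤ × (Fin d → ℤ)} {x : Fin d → ℝ}
    (hgen : x ∉ Bad d) (hxp : x ∈ dc p) (hxq : x ∈ dc q) (hpq : p.1 ≤ q.1) :
    dc p ⊆ dc q := by
  rw [mem_dc] at hxp hxq
  have hne : (fun i => (2:ℝ)^p.1 * (p.2 i : ℝ)) ≤ fun i => (2:ℝ)^p.1 * (p.2 i : ℝ) + 2^p.1 :=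
    fun i => le_add_of_nonneg_right (by positivity)
  rw [dc, cube, dc, cube, Set.Icc_subset_Icc_iff hne]
  have hg : ∀ (i : Fin d) (n k : ℤ), x i ≠ 2^n * k := by
    intro i n k h; exact hgen ⟨i, n, k, h⟩
  have main : ∀ i, (2:ℝ)^q.1 * (q.2 i : ℝ) ≤ 2^p.1 * (p.2 i : ℝ) ∧
      (2:ℝ)^p.1 * (p.2 i : ℝ) + 2^p.1 ≤ 2^q.1 * (q.2 i : ℝ) + 2^q.1 := by
    intro i
    obtain ⟨a1, a2⟩ := hxp i
    obtain ⟨b1, b2⟩ := hxq i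
    have s1 : (2:ℝ)^p.1 * (p.2 i : ℝ) < x i := lt_of_le_of_ne a1 (fun h => hg i p.1 (p.2 i) h.symm)
    have s2 : x i < (2:ℝ)^p.1 * (p.2 i : ℝ) + 2^p.1 := by
      refine lt_of_le_of_ne a2 (fun h => hg i p.1 (p.2 i + 1) ?_)
      push_cast; linarith [h]
    have s3 : (2:ℝ)^q.1 * (q.2 i : ℝ) < x i := lt_of_le_of_ne b1 (fun h => hg i q.1 (q.2 i) h.symm)
    have s4 : x i < (2:ℝ)^q.1 * (q.2 i : ℝ) + 2^q.1 := by
      refine lt_of_le_of_ne b2 (fun h => hg i q.1 (q.2 i + 1) ?_)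
      push_cast; linarith [h]
    exact key hpq s1 s2 s3 s4
  exact ⟨fun i => (main i).1, fun i => (main i).2⟩


/-- The sum `Σ_{Q ∋ x, Q ⊆ R} a(Q)` written with indicators over the full countable index. -/
noncomputable def Fsum (a : (ℤ × (Fin d → ℤ)) → ℝ) (R : ℤ × (Fin d → ℤ)) (x : Fin d → ℝ) : ℝ≥0∞ :=
  ∑' Q : ℤ × (Fin d → ℤ), if dc Q ⊆ dc R ∧ x ∈ dc Q then ENNReal.ofReal (a Q) else 0

lemma Fsum_eq (a : (ℤ × (Fin d → ℤ)) → ℝ) (R : ℤ × (Fin d → ℤ)) (x : Fin d → ℝ) :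
    (∑' Q : {Q : ℤ × (Fin d → ℤ) // x ∈ dc Q ∧ dc Q ⊆ dc R}, ENNReal.ofReal (a Q.val))
      = Fsum a R x := by
  have h0 : (∑' Q : {Q : ℤ × (Fin d → ℤ) // x ∈ dc Q ∧ dc Q ⊆ dc R}, ENNReal.ofReal (a Q.val))
      = ∑' Q : ℤ × (Fin d → ℤ),
          Set.indicator {Q | x ∈ dc Q ∧ dc Q ⊆ dc R} (fun Q => ENNReal.ofReal (a Q)) Q :=
    tsum_subtype {Q : ℤ × (Fin d → ℤ) | x ∈ dc Q ∧ dc Q ⊆ dc R} (fun Q => ENNReal.ofReal (a Q))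
  rw [h0, Fsum]
  refine tsum_congr fun Q => ?_
  simp only [Set.indicator_apply, Set.mem_setOf_eq, and_comm]

lemma measurable_Fsum (a : (ℤ × (Fin d → ℤ)) → ℝ) (R : ℤ × (Fin d → ℤ)) :
    Measurable (Fsum a R) := by
  apply Measurable.ennreal_tsum
  intro Q
  by_cases h : dc Q ⊆ dc R
  · simp only [h, true_and]
    have : (fun x => if x ∈ dc Q then ENNReal.ofReal (a Q) else 0)
        = (dc Q).indicator (fun _ => ENNReal.ofReal (a Q)) := by
      ext x; rw [Set.indicator_apply]
    rw [this]
    exact measurable_const.indicator (measurableSet_dc Q)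
  · simp only [h, false_and, if_false]
    exact measurable_const

/-- The good set inside `dc R`. -/
noncomputable def Eset (a : (ℤ × (Fin d → ℤ)) → ℝ) (N : ℝ) (R : ℤ × (Fin d → ℤ)) :
    Set (Fin d → ℝ) :=
  {x ∈ dc R | Fsum a R x ≤ ENNReal.ofReal N}

lemma Eset_eq (a : (ℤ × (Fin d → ℤ)) → ℝ) (N : ℝ) (R : ℤ × (Fin d → ℤ)) :
    {x ∈ dc R | (∑' Q : {Q : ℤ × (Fin d → ℤ) // x ∈ dc Q ∧ dc Q ⊆ dc R},
        ENNReal.ofReal (a Q.val)) ≤ ENNReal.ofReal N} = Eset a N R := by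
  ext x; simp only [Eset, Set.mem_setOf_eq, Fsum_eq]

lemma measurableSet_Eset (a : (ℤ × (Fin d → ℤ)) → ℝ) (N : ℝ) (R : ℤ × (Fin d → ℤ)) :
    MeasurableSet (Eset a N R) := by
  have : Eset a N R = dc R ∩ (Fsum a R) ⁻¹' (Set.Iic (ENNReal.ofReal N)) := by
    ext x; simp [Eset, Set.mem_setOf_eq, Set.mem_Iic]
  rw [this]
  exact (measurableSet_dc R).inter ((measurable_Fsum a R) measurableSet_Iic)

lemma Eset_subset (a : (ℤ × (Fin d → ℤ)) → ℝ) (N : ℝ) (R : ℤ × (Fin d → ℤ)) :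
    Eset a N R ⊆ dc R := fun _ hx => hx.1


lemma chain_bound (hd : 0 < d) (a : (ℤ × (Fin d → ℤ)) → ℝ) (N : ℝ) (R : ℤ × (Fin d → ℤ))
    {x : Fin d → ℝ} (hx : x ∉ Bad d) :
    (∑' Q : ℤ × (Fin d → ℤ),
        if dc Q ⊆ dc R then (Eset a N Q).indicator (fun _ => ENNReal.ofReal (a Q)) x else 0)
      ≤ (dc R).indicator (fun _ => ENNReal.ofReal N) x := by
  by_cases hxR : x ∈ dc R
  · rw [Set.indicator_of_mem hxR]
    by_cases hex : ∃ Q : ℤ × (Fin d → ℤ), dc Q ⊆ dc R ∧ x ∈ Eset a N Q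
    · obtain ⟨Q₀, hQ₀⟩ := hex
      have hbdd : ∃ b : ℤ, ∀ n : ℤ,
          (∃ j, dc (n, j) ⊆ dc R ∧ x ∈ Eset a N (n, j)) → n ≤ b :=
        ⟨R.1, fun n ⟨j, hj, _⟩ => scale_le hd hj⟩
      obtain ⟨n0, ⟨j0, hj0sub, hj0mem⟩, hmax⟩ :=
        Int.exists_greatest_of_bdd hbdd ⟨Q₀.1, Q₀.2, hQ₀.1, by simpa using hQ₀.2⟩
      have hterm : ∀ Q : ℤ × (Fin d → ℤ),
          (if dc Q ⊆ dc R then (Eset a N Q).indicator (fun _ => ENNReal.ofReal (a Q)) x else 0)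
            ≤ (if dc Q ⊆ dc (n0, j0) ∧ x ∈ dc Q then ENNReal.ofReal (a Q) else 0) := by
        intro Q
        by_cases h : dc Q ⊆ dc R
        · rw [if_pos h]
          by_cases hE : x ∈ Eset a N Q
          · rw [Set.indicator_of_mem hE]
            have hxQ : x ∈ dc Q := hE.1
            have hle : Q.1 ≤ n0 := hmax Q.1 ⟨Q.2, by simpa using ⟨h, hE⟩⟩
            rw [if_pos ⟨dc_subset_dc hx hxQ hj0mem.1 hle, hxQ⟩]
          · rw [Set.indicator_of_notMem hE]
            exact zero_le
        · rw [if_neg h]; exact zero_le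
      calc _ ≤ ∑' Q : ℤ × (Fin d → ℤ),
            (if dc Q ⊆ dc (n0, j0) ∧ x ∈ dc Q then ENNReal.ofReal (a Q) else 0) :=
          ENNReal.tsum_le_tsum hterm
        _ = Fsum a (n0, j0) x := rfl
        _ ≤ ENNReal.ofReal N := hj0mem.2
    · have hz : ∀ Q : ℤ × (Fin d → ℤ),
          (if dc Q ⊆ dc R then (Eset a N Q).indicator (fun _ => ENNReal.ofReal (a Q)) x else 0)
            = 0 := by
        intro Q
        by_cases h : dc Q ⊆ dc R
        · rw [if_pos h, Set.indicator_of_notMem (fun hE => hex ⟨Q, h, hE⟩)]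
        · rw [if_neg h]
      rw [tsum_congr hz, tsum_zero]
      exact zero_le
  · have hz : ∀ Q : ℤ × (Fin d → ℤ),
        (if dc Q ⊆ dc R then (Eset a N Q).indicator (fun _ => ENNReal.ofReal (a Q)) x else 0)
          = 0 := by
      intro Q
      by_cases h : dc Q ⊆ dc R
      · exact if_pos h ▸ Set.indicator_of_notMem (fun hE => hxR (h hE.1)) _
      · rw [if_neg h]
    rw [tsum_congr hz, tsum_zero]
    exact zero_le


end JN

open JN

/-- Dyadic John–Nirenberg lemma: if `a : Δ → [0,∞)` is such that for every dyadic cube `R` the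
set where `Σ_{Q ∋ x, Q ⊆ R} a(Q) ≤ N` has measure at least `δ|R|`, then
`Σ_{Q ⊆ R} a(Q)|Q| ≤ C(d,N,δ)|R|` for every dyadic `R`. -/
theorem dyadic_john_nirenberg (d : ℕ) (hd : 0 < d) (N δ : ℝ) (hN : 0 < N) (hδ : 0 < δ) :
    ∃ C : ℝ, 0 < C ∧
      ∀ a : (ℤ × (Fin d → ℤ)) → ℝ, (∀ Q, 0 ≤ a Q) →
        (∀ R : ℤ × (Fin d → ℤ),
          ENNReal.ofReal δ * volume (dc R) ≤
            volume {x ∈ dc R |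
              (∑' Q : {Q : ℤ × (Fin d → ℤ) // x ∈ dc Q ∧ dc Q ⊆ dc R},
                  ENNReal.ofReal (a Q.val)) ≤ ENNReal.ofReal N}) →
        ∀ R : ℤ × (Fin d → ℤ),
          (∑' Q : {Q : ℤ × (Fin d → ℤ) // dc Q ⊆ dc R},
              ENNReal.ofReal (a Q.val) * volume (dc Q.val))
            ≤ ENNReal.ofReal C * volume (dc R) := by
  classical
  refine ⟨N / δ, div_pos hN hδ, ?_⟩
  intro a ha hyp R
  have hδ0 : ENNReal.ofReal δ ≠ 0 := (ENNReal.ofReal_pos.mpr hδ).ne'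
  have hδtop : ENNReal.ofReal δ ≠ ⊤ := ENNReal.ofReal_ne_top
  -- rewrite hypothesis using Eset
  have hyp' : ∀ Q : ℤ × (Fin d → ℤ),
      volume (dc Q) ≤ (ENNReal.ofReal δ)⁻¹ * volume (Eset a N Q) := by
    intro Q
    have h1 := hyp Q
    rw [Eset_eq a N Q] at h1
    calc volume (dc Q) = (ENNReal.ofReal δ)⁻¹ * (ENNReal.ofReal δ * volume (dc Q)) := by
          rw [← mul_assoc, ENNReal.inv_mul_cancel hδ0 hδtop, one_mul]
      _ ≤ (ENNReal.ofReal δ)⁻¹ * volume (Eset a N Q) := by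
          exact mul_le_mul_right h1 _
  -- step 1 : rewrite LHS as a sum over the full index type
  have lhs_eq : (∑' Q : {Q : ℤ × (Fin d → ℤ) // dc Q ⊆ dc R},
        ENNReal.ofReal (a Q.val) * volume (dc Q.val))
      = ∑' Q : ℤ × (Fin d → ℤ),
          (if dc Q ⊆ dc R then ENNReal.ofReal (a Q) * volume (dc Q) else 0) := by
    have h0 := tsum_subtype {Q : ℤ × (Fin d → ℤ) | dc Q ⊆ dc R}
      (fun Q => ENNReal.ofReal (a Q) * volume (dc Q))
    exact h0.trans (tsum_congr fun Q => by simp [Set.indicator_apply])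
  rw [lhs_eq]
  -- the integrand family
  set h : (ℤ × (Fin d → ℤ)) → (Fin d → ℝ) → ℝ≥0∞ := fun Q x =>
    if dc Q ⊆ dc R then (Eset a N Q).indicator (fun _ => ENNReal.ofReal (a Q)) x else 0 with hh
  have hmeas : ∀ Q, Measurable (h Q) := by
    intro Q
    by_cases hQ : dc Q ⊆ dc R
    · simp only [hh, hQ, if_true]
      exact measurable_const.indicator (measurableSet_Eset a N Q)
    · simp only [hh, hQ, if_false]
      exact measurable_const
  have hint : ∀ Q : ℤ × (Fin d → ℤ),
      (if dc Q ⊆ dc R then ENNReal.ofReal (a Q) * volume (Eset a N Q) else 0)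
        = ∫⁻ x, h Q x := by
    intro Q
    by_cases hQ : dc Q ⊆ dc R
    · simp only [hh, hQ, if_true]
      rw [lintegral_indicator_const (measurableSet_Eset a N Q)]
    · simp only [hh, hQ, if_false, lintegral_zero]
  calc (∑' Q : ℤ × (Fin d → ℤ), if dc Q ⊆ dc R then ENNReal.ofReal (a Q) * volume (dc Q) else 0)
      ≤ ∑' Q : ℤ × (Fin d → ℤ), (ENNReal.ofReal δ)⁻¹ *
          (if dc Q ⊆ dc R then ENNReal.ofReal (a Q) * volume (Eset a N Q) else 0) := by
        refine ENNReal.tsum_le_tsum fun Q => ?_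
        by_cases hQ : dc Q ⊆ dc R
        · rw [if_pos hQ, if_pos hQ]
          calc ENNReal.ofReal (a Q) * volume (dc Q)
              ≤ ENNReal.ofReal (a Q) * ((ENNReal.ofReal δ)⁻¹ * volume (Eset a N Q)) :=
                mul_le_mul_right (hyp' Q) _
            _ = (ENNReal.ofReal δ)⁻¹ * (ENNReal.ofReal (a Q) * volume (Eset a N Q)) := by ring
        · simp [hQ]
    _ = (ENNReal.ofReal δ)⁻¹ * ∑' Q : ℤ × (Fin d → ℤ),
          (if dc Q ⊆ dc R then ENNReal.ofReal (a Q) * volume (Eset a N Q) else 0) :=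
        ENNReal.tsum_mul_left
    _ = (ENNReal.ofReal δ)⁻¹ * ∑' Q : ℤ × (Fin d → ℤ), ∫⁻ x, h Q x := by
        rw [tsum_congr hint]
    _ = (ENNReal.ofReal δ)⁻¹ * ∫⁻ x, ∑' Q : ℤ × (Fin d → ℤ), h Q x := by
        rw [← lintegral_tsum (fun Q => (hmeas Q).aemeasurable)]
    _ ≤ (ENNReal.ofReal δ)⁻¹ * ∫⁻ x, (dc R).indicator (fun _ => ENNReal.ofReal N) x := by
        refine mul_le_mul_right (lintegral_mono_ae ?_) _
        filter_upwards [measure_eq_zero_iff_ae_notMem.mp (volume_Bad (d := d))] with x hx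
        exact chain_bound hd a N R hx
    _ = (ENNReal.ofReal δ)⁻¹ * (ENNReal.ofReal N * volume (dc R)) := by
        rw [lintegral_indicator_const (measurableSet_dc R)]
    _ = ENNReal.ofReal (N / δ) * volume (dc R) := by
        rw [ENNReal.ofReal_div_of_pos hδ, ENNReal.div_eq_inv_mul, mul_assoc]
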